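/- Consecutive optimality: Let μ₁ ⪯_c ⋯ ⪯_c μ_n be probability measures on compact subsets of ℝ^d in convex order. For each i = 1,…,n−1 let π*_{i,i+1} ∈ Π_M(μ_i, μ_{i+1}) be an optimal martingale coupling for the two-period MOT problem with continuous cost c_i(x_i, x_{i+1}). Then every coupling π* ∈ Π_M(μ₁,…,μ_n) whose consecutive twofold projections satisfy Proj_{i,i+1}(π*) = π*_{i,i+1} for all i is optimal for the multi-period MOT problem with cost c(x₁,…,x_n) = Σ_{i=1}^{n−1} c_i(x_i, x_{i+1}). Conversely, if π ∈ Π_M(μ₁,…,μ_n) is optimal for this cost, then each twofold projection Proj_{i,i+1}(π) is optimal for the corresponding two-period MOT problem between μ_i and μ_{i+1} with cost c_i. -/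

import Mathlib

open MeasureTheory ProbabilityTheory Filter Topology

noncomputable section
namespace MOT

abbrev Euc (d : ℕ) : Type := EuclideanSpace ℝ (Fin d)

variable {d : ℕ}

lemma bound_of_compactSupport {α : Type*} [TopologicalSpace α] {g : α → ℝ}
    (hg : Continuous g) (hsupp : HasCompactSupport g) : ∃ C, ∀ x, |g x| ≤ C := by
  obtain ⟨C, hC⟩ := hsupp.exists_bound_of_continuous hg
  exact ⟨C, fun x => by simpa using hC x⟩

/-- pushing a compProd with a comap'd kernel forward. -/
lemma map_compProd_comap {α β γ : Type*} [MeasurableSpace α] [MeasurableSpace β]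
    [MeasurableSpace γ] (μ : Measure α) [SFinite μ] {f : α → β} (hf : Measurable f)
    (κ : Kernel β γ) [IsSFiniteKernel κ] :
    (μ ⊗ₘ κ.comap f hf).map (fun q => (f q.1, q.2)) = μ.map f ⊗ₘ κ := by
  have hm : Measurable (fun q : α × γ => (f q.1, q.2)) := by fun_prop
  ext s hs
  rw [Measure.map_apply hm hs,
    Measure.compProd_apply (hm hs),
    Measure.compProd_apply hs,
    lintegral_map (Kernel.measurable_kernel_prodMk_left hs) hf]
  refine lintegral_congr fun a => ?_
  rw [Kernel.comap_apply]
  rfl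

lemma measurable_finSnoc {E : Type*} [MeasurableSpace E] {m : ℕ} :
    Measurable (fun q : (Fin m → E) × E => (Fin.snoc q.1 q.2 : Fin (m+1) → E)) := by
  apply measurable_pi_lambda
  intro j
  refine Fin.lastCases ?_ ?_ j
  · simpa [Fin.snoc_last] using measurable_snd
  · intro j
    simp only [Fin.snoc_castSucc]
    exact (measurable_pi_apply j).comp measurable_fst

lemma measurable_finInit {E : Type*} [MeasurableSpace E] {m : ℕ} :
    Measurable (fun p : Fin (m+1) → E => (Fin.init p : Fin m → E)) :=
  measurable_pi_lambda _ fun j => measurable_pi_apply _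

/-- Restriction of a path to its first `m+1` coordinates. -/
def restr {E : Type*} {m k : ℕ} (h : m ≤ k) (p : Fin (k+1) → E) : Fin (m+1) → E :=
  fun j => p (Fin.castLE (by omega) j)

lemma measurable_restr {E : Type*} [MeasurableSpace E] {m k : ℕ} (h : m ≤ k) :
    Measurable (restr (E := E) h) :=
  measurable_pi_lambda _ fun j => measurable_pi_apply _

/-- The Markov chain measure on paths built from an initial law and transition kernels. -/
def chain (μ0 : Measure (Euc d)) (κ : ℕ → Kernel (Euc d) (Euc d)) :
    (k : ℕ) → Measure (Fin (k+1) → Euc d)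
  | 0 => μ0.map (fun x => fun _ => x)
  | (k+1) => ((chain μ0 κ k) ⊗ₘ
      ((κ k).comap (fun p => p (Fin.last k)) (measurable_pi_apply _))).map
      (fun q => Fin.snoc q.1 q.2)

lemma chain_isProb (μ0 : Measure (Euc d)) [IsProbabilityMeasure μ0]
    (κ : ℕ → Kernel (Euc d) (Euc d)) [∀ k, IsMarkovKernel (κ k)] :
    ∀ k, IsProbabilityMeasure (chain μ0 κ k)
  | 0 => Measure.isProbabilityMeasure_map (measurable_pi_lambda _ fun _ => measurable_id).aemeasurable
  | (k+1) => by
      haveI := chain_isProb μ0 κ k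
      exact Measure.isProbabilityMeasure_map measurable_finSnoc.aemeasurable

section Chain

variable (μ0 : Measure (Euc d)) [IsProbabilityMeasure μ0]
  (ν : ℕ → Measure (Euc d)) (κ : ℕ → Kernel (Euc d) (Euc d)) [∀ k, IsMarkovKernel (κ k)]

lemma chain_map_init (k : ℕ) :
    (chain μ0 κ (k+1)).map (fun p => (Fin.init p : Fin (k+1) → Euc d)) = chain μ0 κ k := by
  haveI := chain_isProb μ0 κ k
  rw [chain, Measure.map_map measurable_finInit measurable_finSnoc]
  have h : ((fun p : Fin (k+2) → Euc d => (Fin.init p : Fin (k+1) → Euc d)) ∘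
      (fun q : (Fin (k+1) → Euc d) × Euc d => Fin.snoc q.1 q.2)) = Prod.fst := by
    funext q
    simp [Function.comp, Fin.init_snoc]
  rw [h]
  rw [show (((chain μ0 κ k) ⊗ₘ
      ((κ k).comap (fun p => p (Fin.last k)) (measurable_pi_apply _))).map Prod.fst)
    = (((chain μ0 κ k) ⊗ₘ
      ((κ k).comap (fun p => p (Fin.last k)) (measurable_pi_apply _)))).fst from rfl]
  exact Measure.fst_compProd _ _

lemma chain_map_restr {m k : ℕ} (h : m ≤ k) :
    (chain μ0 κ k).map (restr h) = chain μ0 κ m := by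
  induction k, h using Nat.le_induction with
  | base =>
      have : restr (E := Euc d) (le_refl m) = id := by
        funext p j
        exact congrArg p (Fin.ext rfl)
      rw [this, Measure.map_id]
  | succ k hk ih =>
      have hco : restr (E := Euc d) (Nat.le_succ_of_le hk) =
          (restr hk) ∘ (fun p : Fin (k+2) → Euc d => (Fin.init p : Fin (k+1) → Euc d)) := by
        funext p j
        exact congrArg p (Fin.ext rfl)
      rw [hco, ← Measure.map_map (measurable_restr hk) measurable_finInit,
        chain_map_init, ih]

variable (hmar : ∀ k, (ν k ⊗ₘ κ k).map Prod.snd = ν (k+1))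

include hmar in
lemma chain_snd (k : ℕ) :
    ((chain μ0 κ k).map (fun p => p (Fin.last k)) = ν k) →
    (((chain μ0 κ k) ⊗ₘ
      ((κ k).comap (fun p => p (Fin.last k)) (measurable_pi_apply _))).map Prod.snd = ν (k+1)) := by
  intro hlast
  haveI := chain_isProb μ0 κ k
  have h := map_compProd_comap (chain μ0 κ k) (measurable_pi_apply (Fin.last k)) (κ k)
  have h2 := congrArg (Measure.map (Prod.snd : Euc d × Euc d → Euc d)) h
  have hm : Measurable (fun q : (Fin (k+1) → Euc d) × Euc d => (q.1 (Fin.last k), q.2)) := by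
    fun_prop
  rw [Measure.map_map measurable_snd hm] at h2
  have h3 : ((Prod.snd : Euc d × Euc d → Euc d) ∘
      fun q : (Fin (k+1) → Euc d) × Euc d => (q.1 (Fin.last k), q.2)) = Prod.snd := rfl
  rw [h3, hlast] at h2
  rw [h2, hmar k]

include hmar in
lemma chain_map_eval (hν0 : ν 0 = μ0) :
    ∀ k, ∀ j : Fin (k+1), (chain μ0 κ k).map (fun p => p j) = ν (j : ℕ) := by
  intro k
  induction k with
  | zero =>
      intro j
      have hj : (j : ℕ) = 0 := by omega
      have hm : Measurable (fun (x : Euc d) => (fun _ : Fin 1 => x)) :=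
        measurable_pi_lambda _ fun _ => measurable_id
      rw [hj, hν0, chain, Measure.map_map (measurable_pi_apply _) hm]
      exact Measure.map_id
  | succ k ih =>
      intro j
      haveI := chain_isProb μ0 κ k
      refine Fin.lastCases ?_ ?_ j
      · rw [show (chain μ0 κ (k+1)) = ((chain μ0 κ k) ⊗ₘ
          ((κ k).comap (fun p => p (Fin.last k)) (measurable_pi_apply _))).map
          (fun q => Fin.snoc q.1 q.2) from rfl,
          Measure.map_map (measurable_pi_apply _) measurable_finSnoc]
        have h : ((fun p : Fin (k+2) → Euc d => p (Fin.last (k+1))) ∘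
            (fun q : (Fin (k+1) → Euc d) × Euc d => Fin.snoc q.1 q.2)) = Prod.snd := by
          funext q; simp
        rw [h, chain_snd μ0 ν κ hmar k (by simpa using ih (Fin.last k))]
        simp
      · intro j
        rw [show ((Fin.castSucc j : Fin (k+2)) : ℕ) = (j : ℕ) from rfl]
        have h : (fun p : Fin (k+2) → Euc d => p (Fin.castSucc j)) =
            (fun p : Fin (k+1) → Euc d => p j) ∘
            (fun p : Fin (k+2) → Euc d => (Fin.init p : Fin (k+1) → Euc d)) := rfl
        rw [h, ← Measure.map_map (measurable_pi_apply _) measurable_finInit,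
          chain_map_init, ih]

include hmar in
lemma chain_map_pair (hν0 : ν 0 = μ0) (k : ℕ) :
    (chain μ0 κ (k+1)).map
      (fun p => (p (Fin.castSucc (Fin.last k)), p (Fin.last (k+1)))) = ν k ⊗ₘ κ k := by
  haveI := chain_isProb μ0 κ k
  rw [show (chain μ0 κ (k+1)) = ((chain μ0 κ k) ⊗ₘ
      ((κ k).comap (fun p => p (Fin.last k)) (measurable_pi_apply _))).map
      (fun q => Fin.snoc q.1 q.2) from rfl,
    Measure.map_map (by fun_prop) measurable_finSnoc]
  have h : ((fun p : Fin (k+2) → Euc d => (p (Fin.castSucc (Fin.last k)), p (Fin.last (k+1)))) ∘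
      (fun q : (Fin (k+1) → Euc d) × Euc d => Fin.snoc q.1 q.2)) =
      (fun q : (Fin (k+1) → Euc d) × Euc d => (q.1 (Fin.last k), q.2)) := by
    funext q; simp
  rw [h, map_compProd_comap (chain μ0 κ k) (measurable_pi_apply (Fin.last k)) (κ k),
    show (chain μ0 κ k).map (fun p => p (Fin.last k)) = ν k by
      simpa using chain_map_eval μ0 ν κ hmar hν0 k (Fin.last k)]

include hmar in
lemma chain_martingale (hν0 : ν 0 = μ0)
    (hbar : ∀ k, ∀ᵐ x ∂ν k, ∫ y, y ∂(κ k x) = x ∧ Integrable (fun y => y) (κ k x))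
    {R : ℝ} (hbd : ∀ k, ∀ᵐ y ∂ν k, ‖y‖ ≤ R)
    (i : ℕ) (G : (Fin (i+2) → Euc d) → ℝ) (hG : Measurable G)
    {C : ℝ} (hGbd : ∀ p, |G p| ≤ C)
    (hGind : ∀ (q : Fin (i+1) → Euc d) y, G (Fin.snoc q y) = G (Fin.snoc q 0)) :
    ∫ p, G p • (p (Fin.last (i+1)) - p (Fin.castSucc (Fin.last i))) ∂(chain μ0 κ (i+1)) = 0 := by
  haveI := chain_isProb μ0 κ i
  set M := chain μ0 κ i with hM
  set η := (κ i).comap (fun p : Fin (i+1) → Euc d => p (Fin.last i)) (measurable_pi_apply _)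
    with hη
  have hmeas : Measurable (fun p : Fin (i+2) → Euc d =>
      G p • (p (Fin.last (i+1)) - p (Fin.castSucc (Fin.last i)))) :=
    hG.smul ((measurable_pi_apply _).sub (measurable_pi_apply _))
  have hstep : chain μ0 κ (i+1) = (M ⊗ₘ η).map (fun q => Fin.snoc q.1 q.2) := rfl
  rw [hstep, integral_map measurable_finSnoc.aemeasurable hmeas.aestronglyMeasurable]
  have hsimp : ∀ q : (Fin (i+1) → Euc d) × Euc d,
      G (Fin.snoc q.1 q.2) • ((Fin.snoc q.1 q.2 : Fin (i+2) → Euc d) (Fin.last (i+1)) -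
        (Fin.snoc q.1 q.2 : Fin (i+2) → Euc d) (Fin.castSucc (Fin.last i))) =
      G (Fin.snoc q.1 0) • (q.2 - q.1 (Fin.last i)) := by
    intro q
    rw [hGind q.1 q.2]
    simp
  rw [integral_congr_ae (Eventually.of_forall hsimp)]
  have hlast : M.map (fun p => p (Fin.last i)) = ν i := by
    simpa using chain_map_eval μ0 ν κ hmar hν0 i (Fin.last i)
  have hsnd : (M ⊗ₘ η).map Prod.snd = ν (i+1) := chain_snd μ0 ν κ hmar i hlast
  have hfst : (M ⊗ₘ η).map (fun q => q.1 (Fin.last i)) = ν i := by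
    have h1 : (fun q : (Fin (i+1) → Euc d) × Euc d => q.1 (Fin.last i)) =
        (fun p : Fin (i+1) → Euc d => p (Fin.last i)) ∘ Prod.fst := rfl
    rw [h1, ← Measure.map_map (measurable_pi_apply _) measurable_fst,
      show (M ⊗ₘ η).map Prod.fst = (M ⊗ₘ η).fst from rfl, Measure.fst_compProd, hlast]
  have hC : 0 ≤ C := le_trans (abs_nonneg _) (hGbd 0)
  have hb2 : ∀ᵐ q ∂(M ⊗ₘ η), ‖q.2‖ ≤ R :=
    ae_of_ae_map measurable_snd.aemeasurable (by rw [hsnd]; exact hbd (i+1))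
  have hb1 : ∀ᵐ q ∂(M ⊗ₘ η), ‖q.1 (Fin.last i)‖ ≤ R :=
    ae_of_ae_map
      ((show Measurable (fun q : (Fin (i+1) → Euc d) × Euc d => q.1 (Fin.last i)) by
        fun_prop).aemeasurable)
      (by rw [hfst]; exact hbd i)
  have hFm : AEStronglyMeasurable
      (fun q : (Fin (i+1) → Euc d) × Euc d => G (Fin.snoc q.1 0) • (q.2 - q.1 (Fin.last i)))
      (M ⊗ₘ η) := by
    refine Measurable.aestronglyMeasurable ?_
    exact ((hG.comp (measurable_finSnoc.comp (measurable_fst.prodMk measurable_const)))).smul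
      (measurable_snd.sub ((measurable_pi_apply _).comp measurable_fst))
  have hIntF : Integrable
      (fun q : (Fin (i+1) → Euc d) × Euc d => G (Fin.snoc q.1 0) • (q.2 - q.1 (Fin.last i)))
      (M ⊗ₘ η) := by
    refine Integrable.mono' (integrable_const (C * (R + R))) hFm ?_
    filter_upwards [hb1, hb2] with q h1 h2
    rw [norm_smul, Real.norm_eq_abs]
    refine mul_le_mul (hGbd _) ?_ (norm_nonneg _) hC
    exact le_trans (norm_sub_le _ _) (by linarith)
  rw [Measure.integral_compProd hIntF]
  have hbar' : ∀ᵐ p ∂M, ∫ y, y ∂(κ i (p (Fin.last i))) = p (Fin.last i) ∧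
      Integrable (fun y => y) (κ i (p (Fin.last i))) :=
    ae_of_ae_map (measurable_pi_apply _).aemeasurable (by rw [hlast]; exact hbar i)
  have hae : ∀ᵐ p ∂M, (∫ y, G (Fin.snoc p 0) • (y - p (Fin.last i)) ∂(η p)) = 0 := by
    filter_upwards [hbar'] with p hp
    rw [hη, Kernel.comap_apply, integral_smul, integral_sub hp.2 (integrable_const _),
      integral_const]
    haveI : IsMarkovKernel (κ i) := inferInstance
    simp [hp.1]
  rw [integral_congr_ae hae, integral_zero]

end Chain

/-- Convex order of measures on ℝ^d: `μ ⪯_c ν` iff `∫ φ dμ ≤ ∫ φ dν` for every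
convex function `φ`. -/
def ConvexOrder (μ ν : Measure (Euc d)) : Prop :=
  ∀ φ : Euc d → ℝ, ConvexOn ℝ Set.univ φ → ∫ x, φ x ∂μ ≤ ∫ x, φ x ∂ν

/-- `π` is a two-period martingale coupling of `μ` and `ν`: it has marginals `μ`, `ν`,
and its disintegration `κ` over the first variable has barycenter `x` at `μ`-a.e. `x`. -/
def IsMartCoupling2 (μ ν : Measure (Euc d)) (π : Measure (Euc d × Euc d)) : Prop :=
  π.map Prod.snd = ν ∧
  ∃ κ : Kernel (Euc d) (Euc d), IsMarkovKernel κ ∧ π = μ ⊗ₘ κ ∧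
    ∀ᵐ x ∂μ, ∫ y, y ∂(κ x) = x

/-- `π` is a three-period martingale coupling of `μ₁, μ₂, μ₃`. -/
def IsMartCoupling3 (μ₁ μ₂ μ₃ : Measure (Euc d)) (π : Measure (Euc d × Euc d × Euc d)) : Prop :=
  π.map (fun q => q.1) = μ₁ ∧
  π.map (fun q => q.2.1) = μ₂ ∧
  π.map (fun q => q.2.2) = μ₃ ∧
  ∃ (κ₁ : Kernel (Euc d) (Euc d)) (κ₂ : Kernel (Euc d × Euc d) (Euc d)),
    IsMarkovKernel κ₁ ∧ IsMarkovKernel κ₂ ∧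
    π = ((μ₁ ⊗ₘ κ₁) ⊗ₘ κ₂).map (fun q => (q.1.1, q.1.2, q.2)) ∧
    (∀ᵐ x ∂μ₁, ∫ y, y ∂(κ₁ x) = x) ∧
    (∀ᵐ q ∂(μ₁ ⊗ₘ κ₁), ∫ z, z ∂(κ₂ q) = q.2)

/-- Membership in `Π̄(F, σX, σZ)`: couplings of `σX` and `σZ` whose disintegration `κ`
over the first variable satisfies `∫ z κ(x, dz) = F x` for `σX`-a.e. `x`. -/
def MemPiBar (F : Euc d → Euc d) (σX σZ : Measure (Euc d))
    (π : Measure (Euc d × Euc d)) : Prop :=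
  π.map Prod.snd = σZ ∧
  ∃ κ : Kernel (Euc d) (Euc d), IsMarkovKernel κ ∧ π = σX ⊗ₘ κ ∧
    ∀ᵐ x ∂σX, ∫ z, z ∂(κ x) = F x


/-- `π` is an `(n+1)`-period martingale coupling of the marginals `μ i`: each marginal is
`μ i`, and for each consecutive pair of indices the conditional expectation of the next
coordinate given all previous ones equals the current coordinate (expressed via bounded
continuous test functions depending only on the first coordinates). -/
def IsMartCouplingN {d n : ℕ} (μ : Fin (n + 1) → Measure (Euc d))
    (π : Measure (Fin (n + 1) → Euc d)) : Prop :=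
  (∀ i, π.map (fun x => x i) = μ i) ∧
  ∀ i : Fin n, ∀ g : (Fin (n + 1) → Euc d) → ℝ, Continuous g →
    (∃ C, ∀ x, |g x| ≤ C) →
    (∀ x y : Fin (n + 1) → Euc d, (∀ k, k ≤ i.castSucc → x k = y k) → g x = g y) →
    ∫ x, g x • (x i.succ - x i.castSucc) ∂π = 0


lemma ae_norm_le_of_compact {μ : Measure (Euc d)} {X : Set (Euc d)} (hX : IsCompact X)
    (hμX : μ Xᶜ = 0) : ∃ R : ℝ, 0 ≤ R ∧ ∀ᵐ y ∂μ, ‖y‖ ≤ R := by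
  obtain ⟨r, hr⟩ := hX.isBounded.subset_closedBall 0
  refine ⟨max r 0, le_max_right _ _, ?_⟩
  have : ∀ᵐ y ∂μ, y ∈ X := by
    rw [ae_iff]
    exact hμX
  filter_upwards [this] with y hy
  have := hr hy
  rw [Metric.mem_closedBall, dist_zero_right] at this
  exact le_trans this (le_max_left _ _)

lemma ae_bar_integrable {μ ν : Measure (Euc d)} [IsProbabilityMeasure μ]
    (κ : Kernel (Euc d) (Euc d)) [IsMarkovKernel κ]
    (hsnd : (μ ⊗ₘ κ).map Prod.snd = ν) {R : ℝ} (hR : ∀ᵐ y ∂ν, ‖y‖ ≤ R) :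
    ∀ᵐ x ∂μ, (∀ᵐ y ∂κ x, ‖y‖ ≤ R) ∧ Integrable (fun y => y) (κ x) ∧
      ‖∫ y, y ∂κ x‖ ≤ R := by
  have hbad : MeasurableSet {y : Euc d | ¬ ‖y‖ ≤ R} := by
    simp only [not_le]
    exact (isOpen_lt continuous_const continuous_norm).measurableSet
  have h0 : ν {y : Euc d | ¬ ‖y‖ ≤ R} = 0 := by
    rw [← ae_iff] at *
    exact hR
  have h1 : (μ ⊗ₘ κ) (Prod.snd ⁻¹' {y : Euc d | ¬ ‖y‖ ≤ R}) = 0 := by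
    rw [← Measure.map_apply measurable_snd hbad, hsnd]
    exact h0
  rw [Measure.compProd_apply (measurable_snd hbad)] at h1
  have h2 : ∀ᵐ x ∂μ, κ x {y : Euc d | ¬ ‖y‖ ≤ R} = 0 := by
    have := (lintegral_eq_zero_iff (Kernel.measurable_coe κ hbad)).mp h1
    filter_upwards [this] with x hx
    simpa using hx
  filter_upwards [h2] with x hx
  have hae : ∀ᵐ y ∂κ x, ‖y‖ ≤ R := by
    rw [ae_iff]
    exact hx
  have hint : Integrable (fun y : Euc d => y) (κ x) :=
    Integrable.mono' (integrable_const R) measurable_id.aestronglyMeasurable hae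
  refine ⟨hae, hint, ?_⟩
  have := norm_integral_le_of_norm_le_const (μ := κ x) (f := fun y : Euc d => y) hae
  simpa using this

lemma isProb_of_martN {n : ℕ} {μ : Fin (n+1) → Measure (Euc d)}
    [∀ i, IsProbabilityMeasure (μ i)] {π : Measure (Fin (n+1) → Euc d)}
    (hπ : IsMartCouplingN μ π) : IsProbabilityMeasure π := by
  constructor
  have h := hπ.1 0
  have : (π.map (fun x => x 0)) Set.univ = 1 := by rw [h]; simp
  rwa [Measure.map_apply (measurable_pi_apply _) MeasurableSet.univ, Set.preimage_univ] at this

lemma proj_isMartCoupling2 {n : ℕ} (μ : Fin (n+1) → Measure (Euc d))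
    [∀ i, IsProbabilityMeasure (μ i)] (X : Fin (n+1) → Set (Euc d))
    (hX : ∀ i, IsCompact (X i)) (hμX : ∀ i, μ i (X i)ᶜ = 0)
    (π : Measure (Fin (n+1) → Euc d)) (hπ : IsMartCouplingN μ π) (i : Fin n) :
    IsMartCoupling2 (μ i.castSucc) (μ i.succ)
      (π.map (fun x => (x i.castSucc, x i.succ))) := by
  haveI := isProb_of_martN hπ
  have hm : Measurable (fun x : Fin (n+1) → Euc d => (x i.castSucc, x i.succ)) :=
    (measurable_pi_apply _).prodMk (measurable_pi_apply _)
  set ρ := π.map (fun x => (x i.castSucc, x i.succ)) with hρ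
  haveI : IsProbabilityMeasure ρ := Measure.isProbabilityMeasure_map hm.aemeasurable
  have hsnd : ρ.map Prod.snd = μ i.succ := by
    rw [hρ, Measure.map_map measurable_snd hm]
    exact hπ.1 i.succ
  have hfst : ρ.fst = μ i.castSucc := by
    rw [hρ, show ρ.fst = ρ.map Prod.fst from rfl, hρ, Measure.map_map measurable_fst hm]
    exact hπ.1 i.castSucc
  have hdis : μ i.castSucc ⊗ₘ ρ.condKernel = ρ := by
    rw [← hfst]
    exact ρ.disintegrate ρ.condKernel
  refine ⟨hsnd, ρ.condKernel, inferInstance, hdis.symm, ?_⟩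
  -- barycenter property
  obtain ⟨R, hR0, hRν⟩ := ae_norm_le_of_compact (hX i.succ) (hμX i.succ)
  obtain ⟨R', hR'0, hRμ⟩ := ae_norm_le_of_compact (hX i.castSucc) (hμX i.castSucc)
  have hker := ae_bar_integrable (μ := μ i.castSucc) ρ.condKernel
    (by rw [hdis]; exact hsnd) hRν
  set h : Euc d → Euc d := fun x => (∫ y, y ∂ρ.condKernel x) - x with hh
  have hsm : StronglyMeasurable (fun x => ∫ y, y ∂ρ.condKernel x) :=
    StronglyMeasurable.integral_kernel_prod_right'
      (f := fun p : Euc d × Euc d => p.2) measurable_snd.stronglyMeasurable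
  have hmh : AEStronglyMeasurable h (μ i.castSucc) :=
    (hsm.measurable.sub measurable_id).aestronglyMeasurable
  have hinth : Integrable h (μ i.castSucc) := by
    refine Integrable.mono' (integrable_const (R + R')) hmh ?_
    filter_upwards [hker, hRμ] with x hx hx'
    exact le_trans (norm_sub_le _ _) (add_le_add hx.2.2 hx')
  have key : ∀ᵐ x ∂μ i.castSucc, h x = 0 := by
    refine ae_eq_zero_of_integral_contDiff_smul_eq_zero hinth.locallyIntegrable ?_
    intro g hgC hgsupp
    obtain ⟨Cg, hCg⟩ := bound_of_compactSupport hgC.continuous hgsupp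
    have hCg0 : 0 ≤ Cg := le_trans (abs_nonneg _) (hCg 0)
    -- integrability of F over ρ
    have hFm : AEStronglyMeasurable (fun p : Euc d × Euc d => g p.1 • (p.2 - p.1)) ρ :=
      (((hgC.continuous.measurable.comp measurable_fst)).smul
        (measurable_snd.sub measurable_fst)).aestronglyMeasurable
    have hb1 : ∀ᵐ p ∂ρ, ‖p.1‖ ≤ R' :=
      ae_of_ae_map measurable_fst.aemeasurable (by
        rw [show ρ.map Prod.fst = ρ.fst from rfl, hfst]; exact hRμ)
    have hb2 : ∀ᵐ p ∂ρ, ‖p.2‖ ≤ R :=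
      ae_of_ae_map measurable_snd.aemeasurable (by rw [hsnd]; exact hRν)
    have hIntF : Integrable (fun p : Euc d × Euc d => g p.1 • (p.2 - p.1)) ρ := by
      refine Integrable.mono' (integrable_const (Cg * (R + R'))) hFm ?_
      filter_upwards [hb1, hb2] with p h1 h2
      rw [norm_smul, Real.norm_eq_abs]
      refine mul_le_mul (hCg _) ?_ (norm_nonneg _) hCg0
      exact le_trans (norm_sub_le _ _) (by linarith)
    have step1 : ∫ x, g x • h x ∂μ i.castSucc =
        ∫ x, ∫ y, g x • (y - x) ∂ρ.condKernel x ∂μ i.castSucc := by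
      refine integral_congr_ae ?_
      filter_upwards [hker] with x hx
      rw [integral_smul, integral_sub hx.2.1 (integrable_const _), integral_const]
      simp [hh]
    have hIntF' : Integrable (fun p : Euc d × Euc d => g p.1 • (p.2 - p.1))
        (μ i.castSucc ⊗ₘ ρ.condKernel) := by
      rw [hdis]; exact hIntF
    have step2 : ∫ x, ∫ y, g x • (y - x) ∂ρ.condKernel x ∂μ i.castSucc =
        ∫ p : Euc d × Euc d, g p.1 • (p.2 - p.1) ∂ρ := by
      rw [← Measure.integral_compProd hIntF', hdis]
    have step3 : ∫ p : Euc d × Euc d, g p.1 • (p.2 - p.1) ∂ρ =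
        ∫ x, g (x i.castSucc) • (x i.succ - x i.castSucc) ∂π := by
      rw [hρ, integral_map hm.aemeasurable hFm]
    have step4 : ∫ x, g (x i.castSucc) • (x i.succ - x i.castSucc) ∂π = 0 := by
      refine hπ.2 i (fun x => g (x i.castSucc)) ?_ ⟨Cg, fun x => hCg _⟩ ?_
      · exact hgC.continuous.comp (continuous_apply _)
      · intro x y hxy
        exact congrArg g (hxy i.castSucc le_rfl)
    rw [step1, step2, step3, step4]
  filter_upwards [key] with x hx
  have hx' : (∫ y, y ∂ρ.condKernel x) - x = 0 := hx
  exact sub_eq_zero.mp hx'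

lemma ae_mem_X {n : ℕ} {μ : Fin (n+1) → Measure (Euc d)} {X : Fin (n+1) → Set (Euc d)}
    (hX : ∀ i, IsCompact (X i)) (hμX : ∀ i, μ i (X i)ᶜ = 0)
    {π : Measure (Fin (n+1) → Euc d)} (hπm : ∀ i, π.map (fun x => x i) = μ i)
    (j : Fin (n+1)) : ∀ᵐ x ∂π, x j ∈ X j := by
  have hXm : MeasurableSet ((X j)ᶜ) := (hX j).isClosed.measurableSet.compl
  have h0 : π ((fun x => x j) ⁻¹' (X j)ᶜ) = 0 := by
    rw [← Measure.map_apply (measurable_pi_apply j) hXm, hπm j]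
    exact hμX j
  rw [ae_iff]
  exact h0

lemma cost_integrable_eq {n : ℕ} {μ : Fin (n+1) → Measure (Euc d)}
    [∀ i, IsProbabilityMeasure (μ i)]
    {X : Fin (n+1) → Set (Euc d)} (hX : ∀ i, IsCompact (X i)) (hμX : ∀ i, μ i (X i)ᶜ = 0)
    {π : Measure (Fin (n+1) → Euc d)} (hπ : IsMartCouplingN μ π)
    {c : Euc d × Euc d → ℝ} (hc : Continuous c) (i : Fin n) :
    Integrable (fun x => c (x i.castSucc, x i.succ)) π ∧
    ∫ x, c (x i.castSucc, x i.succ) ∂π =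
      ∫ p, c p ∂(π.map (fun x => (x i.castSucc, x i.succ))) := by
  haveI := isProb_of_martN hπ
  have hm : Measurable (fun x : Fin (n+1) → Euc d => (x i.castSucc, x i.succ)) :=
    (measurable_pi_apply _).prodMk (measurable_pi_apply _)
  obtain ⟨C, hC⟩ :=
    ((hX i.castSucc).prod (hX i.succ)).exists_bound_of_continuousOn hc.continuousOn
  have hae : ∀ᵐ x ∂π, ‖c (x i.castSucc, x i.succ)‖ ≤ C := by
    filter_upwards [ae_mem_X hX hμX hπ.1 i.castSucc, ae_mem_X hX hμX hπ.1 i.succ] with x h1 h2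
    exact hC _ ⟨h1, h2⟩
  have hint : Integrable (fun x => c (x i.castSucc, x i.succ)) π :=
    Integrable.mono' (integrable_const C)
      ((hc.measurable.comp hm).aestronglyMeasurable) hae
  refine ⟨hint, ?_⟩
  rw [integral_map hm.aemeasurable hc.measurable.aestronglyMeasurable]

lemma sum_cost_eq {n : ℕ} {μ : Fin (n+1) → Measure (Euc d)}
    [∀ i, IsProbabilityMeasure (μ i)]
    {X : Fin (n+1) → Set (Euc d)} (hX : ∀ i, IsCompact (X i)) (hμX : ∀ i, μ i (X i)ᶜ = 0)
    {π : Measure (Fin (n+1) → Euc d)} (hπ : IsMartCouplingN μ π)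
    {c : Fin n → Euc d × Euc d → ℝ} (hc : ∀ i, Continuous (c i)) :
    ∫ x, (∑ i : Fin n, c i (x i.castSucc, x i.succ)) ∂π =
      ∑ i : Fin n, ∫ p, c i p ∂(π.map (fun x => (x i.castSucc, x i.succ))) := by
  rw [integral_finset_sum _ (fun i _ => (cost_integrable_eq hX hμX hπ (hc i) i).1)]
  exact Finset.sum_congr rfl fun i _ => (cost_integrable_eq hX hμX hπ (hc i) i).2

lemma snd_compProd_id (μ : Measure (Euc d)) [SFinite μ] :
    (μ ⊗ₘ (Kernel.id : Kernel (Euc d) (Euc d))).map Prod.snd = μ := by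
  ext s hs
  rw [Measure.map_apply measurable_snd hs, Measure.compProd_apply (measurable_snd hs)]
  have h : ∀ x : Euc d, (Kernel.id : Kernel (Euc d) (Euc d)) x
      (Prod.mk x ⁻¹' (Prod.snd ⁻¹' s)) = s.indicator (fun _ => 1) x := by
    intro x
    rw [Kernel.id_apply]
    by_cases hx : x ∈ s <;> simp [hx, Measure.dirac_apply' _ hs, Set.indicator_apply]
  simp_rw [h]
  simp [lintegral_indicator, hs]

lemma exists_chain_coupling {n : ℕ} (μ : Fin (n+1) → Measure (Euc d))
    [∀ i, IsProbabilityMeasure (μ i)] (X : Fin (n+1) → Set (Euc d))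
    (hX : ∀ i, IsCompact (X i)) (hμX : ∀ i, μ i (X i)ᶜ = 0)
    (πs : Fin n → Measure (Euc d × Euc d))
    (hπs : ∀ i, IsMartCoupling2 (μ i.castSucc) (μ i.succ) (πs i)) :
    ∃ π : Measure (Fin (n+1) → Euc d), IsMartCouplingN μ π ∧
      ∀ i : Fin n, π.map (fun x => (x i.castSucc, x i.succ)) = πs i := by
  classical
  have hκ : ∀ i : Fin n, ∃ κ : Kernel (Euc d) (Euc d), IsMarkovKernel κ ∧
      πs i = μ i.castSucc ⊗ₘ κ ∧ ∀ᵐ x ∂μ i.castSucc, ∫ y, y ∂κ x = x := fun i => (hπs i).2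
  choose κc hκM hκeq hκbar using hκ
  haveI : ∀ i, IsMarkovKernel (κc i) := hκM
  set κ' : ℕ → Kernel (Euc d) (Euc d) :=
    fun k => if h : k < n then κc ⟨k, h⟩ else Kernel.id with hκ'
  haveI hκ'M : ∀ k, IsMarkovKernel (κ' k) := by
    intro k
    rw [hκ']
    by_cases h : k < n <;> simp only [h, dif_pos, dif_neg, not_false_iff] <;> infer_instance
  set ν : ℕ → Measure (Euc d) :=
    fun k => if h : k < n + 1 then μ ⟨k, h⟩ else μ (Fin.last n) with hν
  haveI hνP : ∀ k, IsProbabilityMeasure (ν k) := by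
    intro k
    rw [hν]
    by_cases h : k < n + 1 <;> simp only [h, dif_pos, dif_neg, not_false_iff] <;> infer_instance
  have hν0 : ν 0 = μ 0 := by simp [hν]
  have hνval : ∀ (i : Fin (n+1)), ν (i : ℕ) = μ i := by
    intro i
    rw [hν]
    simp only [i.isLt, dif_pos, Fin.eta]
  have hνcast : ∀ (i : Fin n), ν (i : ℕ) = μ i.castSucc := fun i => hνval i.castSucc
  have hνsucc : ∀ (i : Fin n), ν ((i : ℕ) + 1) = μ i.succ := fun i => hνval i.succ
  have hκ'val : ∀ (i : Fin n), κ' (i : ℕ) = κc i := by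
    intro i
    rw [hκ']
    simp only [i.isLt, dif_pos, Fin.eta]
  have hmar : ∀ k, (ν k ⊗ₘ κ' k).map Prod.snd = ν (k+1) := by
    intro k
    by_cases h : k < n
    · have : (⟨k, h⟩ : Fin n).castSucc = ⟨k, by omega⟩ := rfl
      rw [show ν k = μ (⟨k, h⟩ : Fin n).castSucc from hνcast ⟨k, h⟩,
        show κ' k = κc ⟨k, h⟩ from hκ'val ⟨k, h⟩, ← hκeq ⟨k, h⟩, (hπs ⟨k, h⟩).1,
        ← hνsucc ⟨k, h⟩]
    · have hk1 : κ' k = Kernel.id := by rw [hκ']; simp [h]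
      have hνlast : ∀ t, n ≤ t → ν t = μ (Fin.last n) := by
        intro t ht
        rw [hν]
        by_cases h2 : t < n + 1
        · have ht2 : t = n := by omega
          subst ht2
          simp only [h2, dif_pos]
          exact congrArg μ (Fin.ext rfl)
        · simp only [h2, dif_neg, not_false_iff]
      have hν1 : ν (k+1) = ν k := by
        rw [hνlast _ (by omega), hνlast _ (by omega)]
      rw [hk1, hν1, snd_compProd_id]
  have hbar : ∀ k, ∀ᵐ x ∂ν k, ∫ y, y ∂(κ' k x) = x ∧ Integrable (fun y => y) (κ' k x) := by
    intro k
    by_cases h : k < n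
    · set i : Fin n := ⟨k, h⟩
      obtain ⟨R, _, hR⟩ := ae_norm_le_of_compact (hX i.succ) (hμX i.succ)
      have hsnd : (μ i.castSucc ⊗ₘ κc i).map Prod.snd = μ i.succ := by
        rw [← hκeq i]; exact (hπs i).1
      have hint := ae_bar_integrable (κ := κc i) hsnd hR
      rw [show ν k = μ i.castSucc from hνcast i, show κ' k = κc i from hκ'val i]
      filter_upwards [hκbar i, hint] with x h1 h2
      exact ⟨h1, h2.2.1⟩
    · have hk1 : κ' k = Kernel.id := by rw [hκ']; simp [h]
      rw [hk1]
      refine Eventually.of_forall fun x => ?_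
      rw [Kernel.id_apply]
      constructor
      · exact integral_dirac _ _
      · refine Integrable.mono' (integrable_const ‖x‖)
          measurable_id.aestronglyMeasurable ?_
        exact (ae_dirac_iff (measurableSet_le (by fun_prop) measurable_const)).mpr le_rfl
  obtain ⟨R, hR⟩ : ∃ R : ℝ, ∀ k, ∀ᵐ y ∂ν k, ‖y‖ ≤ R := by
    have h : ∀ i : Fin (n+1), ∃ R, 0 ≤ R ∧ ∀ᵐ y ∂μ i, ‖y‖ ≤ R :=
      fun i => ae_norm_le_of_compact (hX i) (hμX i)
    choose Rf hRf0 hRf using h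
    refine ⟨Finset.univ.sup' ⟨0, Finset.mem_univ 0⟩ Rf, fun k => ?_⟩
    rw [hν]
    by_cases h : k < n + 1
    · simp only [h, dif_pos]
      filter_upwards [hRf ⟨k, h⟩] with y hy
      exact le_trans hy (Finset.le_sup' _ (Finset.mem_univ _))
    · simp only [h, dif_neg, not_false_iff]
      filter_upwards [hRf (Fin.last n)] with y hy
      exact le_trans hy (Finset.le_sup' _ (Finset.mem_univ _))
  refine ⟨chain (μ 0) κ' n, ⟨?_, ?_⟩, ?_⟩
  · intro i
    have := chain_map_eval (μ 0) ν κ' hmar hν0 n i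
    rw [this, hνval i]
  · -- martingale property
    intro i g hgc hgbd hgdep
    obtain ⟨C, hC⟩ := hgbd
    set m : ℕ := (i : ℕ) with hm
    have h1 : m + 1 ≤ n := i.isLt
    -- extension map
    set ext : (Fin (m+2) → Euc d) → (Fin (n+1) → Euc d) :=
      fun q j => if h : (j : ℕ) < m + 2 then q ⟨j, h⟩ else 0 with hext
    have hextm : Measurable ext := by
      refine measurable_pi_lambda _ fun j => ?_
      by_cases h : (j : ℕ) < m + 2
      · simpa [hext, h] using measurable_pi_apply (⟨(j : ℕ), h⟩ : Fin (m+2))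
      · simpa [hext, h] using measurable_const
    set G : (Fin (m+2) → Euc d) → ℝ := fun q => g (ext q) with hG
    have hGm : Measurable G := hgc.measurable.comp hextm
    have hGbd : ∀ q, |G q| ≤ C := fun q => hC _
    have hGind : ∀ (q : Fin (m+1) → Euc d) (y : Euc d),
        G (Fin.snoc q y) = G (Fin.snoc q 0) := by
      intro q y
      refine hgdep _ _ fun k hk => ?_
      have hk2 : (k : ℕ) < m + 2 := by
        have : (k : ℕ) ≤ m := hk
        omega
      have hk1 : (k : ℕ) < m + 1 := by
        have : (k : ℕ) ≤ m := hk
        omega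
      have hcs : (⟨(k : ℕ), hk2⟩ : Fin (m+2)) = Fin.castSucc ⟨(k : ℕ), hk1⟩ := rfl
      simp only [hext, hk2, dif_pos, hcs, Fin.snoc_castSucc]
    have hres : ∀ x : Fin (n+1) → Euc d, g x = G (restr h1 x) := by
      intro x
      refine hgdep _ _ fun k hk => ?_
      have hk2 : (k : ℕ) < m + 2 := by
        have : (k : ℕ) ≤ m := hk
        omega
      simp only [hext, hG, hk2, dif_pos, restr]
      exact (congrArg x (Fin.ext rfl)).symm
    have hval1 : ∀ x : Fin (n+1) → Euc d, x i.succ = restr h1 x (Fin.last (m+1)) := by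
      intro x
      exact congrArg x (Fin.ext rfl)
    have hval2 : ∀ x : Fin (n+1) → Euc d,
        x i.castSucc = restr h1 x (Fin.castSucc (Fin.last m)) := by
      intro x
      exact congrArg x (Fin.ext rfl)
    have hpt : ∀ x : Fin (n+1) → Euc d, g x • (x i.succ - x i.castSucc) =
        G (restr h1 x) • (restr h1 x (Fin.last (m+1)) -
          restr h1 x (Fin.castSucc (Fin.last m))) := by
      intro x
      rw [← hres x, ← hval1 x, ← hval2 x]
    rw [integral_congr_ae (Eventually.of_forall hpt)]
    have hintm : Measurable (fun q : Fin (m+2) → Euc d =>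
        G q • (q (Fin.last (m+1)) - q (Fin.castSucc (Fin.last m)))) :=
      hGm.smul ((measurable_pi_apply _).sub (measurable_pi_apply _))
    rw [← integral_map (measurable_restr h1).aemeasurable hintm.aestronglyMeasurable,
      chain_map_restr (μ 0) κ' h1]
    exact chain_martingale (μ 0) ν κ' hmar hν0 hbar hR m G hGm hGbd hGind
  · -- pair projections
    intro i
    set m : ℕ := (i : ℕ) with hm
    have h1 : m + 1 ≤ n := i.isLt
    have hco : (fun x : Fin (n+1) → Euc d => (x i.castSucc, x i.succ)) =
        (fun q : Fin (m+2) → Euc d =>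
          (q (Fin.castSucc (Fin.last m)), q (Fin.last (m+1)))) ∘ restr h1 := by
      funext x
      simp only [Function.comp, restr]
      exact Prod.ext (congrArg x (Fin.ext rfl)) (congrArg x (Fin.ext rfl))
    rw [hco, ← Measure.map_map (by fun_prop) (measurable_restr h1),
      chain_map_restr (μ 0) κ' h1,
      chain_map_pair (μ 0) ν κ' hmar hν0 m,
      show ν m = μ i.castSucc from hνcast i, show κ' m = κc i from hκ'val i, ← hκeq i]

/-- **Consecutive optimality.** If `π*_{i,i+1}` is optimal for the two-period MOT problem with
continuous cost `c i`, then every multi-period martingale coupling whose consecutive twofold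
projections are the `π*_{i,i+1}` is optimal for the cost `Σᵢ cᵢ(xᵢ, xᵢ₊₁)`; conversely, the
consecutive twofold projections of any optimal multi-period coupling are optimal for the
corresponding two-period problems. -/
theorem consecutive_optimality {d n : ℕ}
    (μ : Fin (n + 1) → Measure (Euc d)) [∀ i, IsProbabilityMeasure (μ i)]
    (X : Fin (n + 1) → Set (Euc d)) (hX : ∀ i, IsCompact (X i))
    (hμX : ∀ i, μ i (X i)ᶜ = 0)
    (hord : ∀ i : Fin n, ConvexOrder (μ i.castSucc) (μ i.succ))
    (c : Fin n → Euc d × Euc d → ℝ) (hc : ∀ i, Continuous (c i))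
    (πs : Fin n → Measure (Euc d × Euc d))
    (hπs : ∀ i, IsMartCoupling2 (μ i.castSucc) (μ i.succ) (πs i))
    (hπsopt : ∀ i, ∀ π', IsMartCoupling2 (μ i.castSucc) (μ i.succ) π' →
      ∫ p, c i p ∂(πs i) ≤ ∫ p, c i p ∂π') :
    (∀ π : Measure (Fin (n + 1) → Euc d), IsMartCouplingN μ π →
      (∀ i : Fin n, π.map (fun x => (x i.castSucc, x i.succ)) = πs i) →
      ∀ π', IsMartCouplingN μ π' →
        ∫ x, (∑ i : Fin n, c i (x i.castSucc, x i.succ)) ∂π ≤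
          ∫ x, (∑ i : Fin n, c i (x i.castSucc, x i.succ)) ∂π') ∧
    (∀ π : Measure (Fin (n + 1) → Euc d), IsMartCouplingN μ π →
      (∀ π', IsMartCouplingN μ π' →
        ∫ x, (∑ i : Fin n, c i (x i.castSucc, x i.succ)) ∂π ≤
          ∫ x, (∑ i : Fin n, c i (x i.castSucc, x i.succ)) ∂π') →
      ∀ i : Fin n,
        IsMartCoupling2 (μ i.castSucc) (μ i.succ)
          (π.map (fun x => (x i.castSucc, x i.succ))) ∧
        ∀ π', IsMartCoupling2 (μ i.castSucc) (μ i.succ) π' →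
          ∫ p, c i p ∂(π.map (fun x => (x i.castSucc, x i.succ))) ≤ ∫ p, c i p ∂π') := by
  constructor
  · -- sufficiency
    intro π hπ hproj π' hπ'
    rw [sum_cost_eq hX hμX hπ hc, sum_cost_eq hX hμX hπ' hc]
    refine Finset.sum_le_sum fun i _ => ?_
    rw [hproj i]
    exact hπsopt i _ (proj_isMartCoupling2 μ X hX hμX π' hπ' i)
  · -- necessity
    intro π hπ hopt i
    obtain ⟨πt, hπt, hπtproj⟩ := exists_chain_coupling μ X hX hμX πs hπs
    refine ⟨proj_isMartCoupling2 μ X hX hμX π hπ i, ?_⟩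
    intro π' hπ'2
    have h1 : ∀ j : Fin n, ∫ p, c j p ∂(πs j) ≤
        ∫ p, c j p ∂(π.map (fun x => (x j.castSucc, x j.succ))) :=
      fun j => hπsopt j _ (proj_isMartCoupling2 μ X hX hμX π hπ j)
    have h2 := hopt πt hπt
    rw [sum_cost_eq hX hμX hπ hc, sum_cost_eq hX hμX hπt hc] at h2
    simp_rw [hπtproj] at h2
    have h3 : ∑ j : Fin n, ∫ p, c j p ∂(πs j) ≤
        ∑ j : Fin n, ∫ p, c j p ∂(π.map (fun x => (x j.castSucc, x j.succ))) :=
      Finset.sum_le_sum fun j _ => h1 j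
    have hs : ∑ j : Fin n, ∫ p, c j p ∂(πs j) =
        ∑ j : Fin n, ∫ p, c j p ∂(π.map (fun x => (x j.castSucc, x j.succ))) :=
      le_antisymm h3 h2
    have heq := (Finset.sum_eq_sum_iff_of_le fun j _ => h1 j).mp hs i (Finset.mem_univ i)
    rw [← heq]
    exact hπsopt i π' hπ'2

end MOT
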